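/- Let N ≥ 1, δ > 0, 0 < t_1 < … < t_N < 1, and μ_1,…,μ_N reals. Let γ_n < 0 with γ_n → 0 and n|γ_n| → ∞, and set k(m) = ⌊n t_m⌋. Define c_i = ∑_{m : i ≤ k(m)−1} k(m)^{−1/4} μ_m e^{(k(m)−i)γ_n/√{k(m)}}. Then |γ_n|·∑_{i=1}^{k(N)−1} |c_i|^{2+δ} → 0 as n → ∞. -/

import Mathlib

open Filter Finset Real

lemma geom_exp_sum_le (K : ℕ) (g : ℝ) (hK : 1 ≤ K) (hg : g < 0) :
    ∑ i ∈ Finset.Icc 1 (K - 1), Real.exp (((K : ℝ) - i) * g / Real.sqrt K)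
      ≤ Real.sqrt K / |g| + 1 := by
  have hK0 : (0:ℝ) < K := by exact_mod_cast hK
  have hs : 0 < Real.sqrt K := Real.sqrt_pos.mpr hK0
  set r := Real.exp (g / Real.sqrt K) with hr
  have hr0 : 0 < r := Real.exp_pos _
  have hr1 : r < 1 := by
    rw [hr, Real.exp_lt_one_iff]
    exact div_neg_of_neg_of_pos hg hs
  have hterm : ∀ i ∈ Finset.Icc 1 (K - 1),
      Real.exp (((K : ℝ) - i) * g / Real.sqrt K) = r ^ (K - i) := by
    intro i hi
    rw [Finset.mem_Icc] at hi
    rw [hr, ← Real.exp_nat_mul]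
    congr 1
    have hiK : i ≤ K := le_trans hi.2 (Nat.sub_le _ _)
    have : ((K - i : ℕ) : ℝ) = (K : ℝ) - i := by
      push_cast [Nat.cast_sub hiK]; ring
    rw [this]; ring
  rw [Finset.sum_congr rfl hterm]
  have hre : ∑ i ∈ Finset.Icc 1 (K - 1), r ^ (K - i)
      = ∑ j ∈ Finset.Icc 1 (K - 1), r ^ j := by
    refine Finset.sum_nbij' (fun i => K - i) (fun j => K - j) ?_ ?_ ?_ ?_ ?_
    · intro a ha; simp only [Finset.mem_Icc] at ha ⊢; omega
    · intro a ha; simp only [Finset.mem_Icc] at ha ⊢; omega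
    · intro a ha; simp only [Finset.mem_Icc] at ha; omega
    · intro a ha; simp only [Finset.mem_Icc] at ha; omega
    · intro a ha; rfl
  rw [hre]
  have h1 : ∑ j ∈ Finset.Icc 1 (K - 1), r ^ j ≤ ∑ j ∈ Finset.range K, r ^ j := by
    apply Finset.sum_le_sum_of_subset_of_nonneg
    · intro j hj
      rw [Finset.mem_Icc] at hj
      rw [Finset.mem_range]; omega
    · intros; positivity
  have h2 : ∑ j ∈ Finset.range K, r ^ j ≤ (1 - r)⁻¹ := by
    rw [← tsum_geometric_of_lt_one hr0.le hr1]
    exact Summable.sum_le_tsum _ (fun i _ => by positivity)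
      (summable_geometric_of_lt_one hr0.le hr1)
  set x := |g| / Real.sqrt K with hx
  have hx0 : 0 < x := div_pos (abs_pos.mpr hg.ne) hs
  have hrx : r = Real.exp (-x) := by
    rw [hr, hx, abs_of_neg hg]; congr 1; field_simp
  have hrle : r ≤ (1 + x)⁻¹ := by
    rw [hrx, Real.exp_neg]
    apply inv_anti₀ (by linarith)
    linarith [Real.add_one_le_exp x]
  have hsub : x / (1 + x) ≤ 1 - r := by
    have h : (1:ℝ) - (1 + x)⁻¹ = x / (1 + x) := by field_simp; ring
    linarith [h ▸ sub_le_sub_left hrle 1]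
  have h3 : (1 - r)⁻¹ ≤ Real.sqrt K / |g| + 1 := by
    have h4 : (1 - r)⁻¹ ≤ (x / (1 + x))⁻¹ := inv_anti₀ (by positivity) hsub
    have h5 : (x / (1 + x))⁻¹ = Real.sqrt K / |g| + 1 := by
      rw [inv_div, add_div, div_self hx0.ne', hx, one_div_div]
    linarith [h5 ▸ h4]
  calc ∑ j ∈ Finset.Icc 1 (K - 1), r ^ j ≤ (1 - r)⁻¹ := le_trans h1 h2
    _ ≤ _ := h3

lemma per_n_bound (N : ℕ) (δ : ℝ) (hδ : 0 < δ) (μc : Fin N → ℝ) (g : ℝ)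
    (hgneg : g < 0) (hg1 : |g| ≤ 1) (K : Fin N → ℕ) (KN : ℕ) (nr : ℝ)
    (P : ℝ) (hP1 : 1 ≤ P)
    (hKlb : ∀ m, P ≤ (K m : ℝ)) (hKub : ∀ m, (K m : ℝ) ≤ nr)
    (c : ℕ → ℝ)
    (hc : ∀ i, c i = ∑ m ∈ Finset.univ.filter (fun m => i ≤ K m - 1),
      ((K m : ℝ) ^ (-(1/4 : ℝ))) * μc m * Real.exp (((K m : ℝ) - i) * g / Real.sqrt (K m))) :
    |g| * ∑ i ∈ Finset.Icc 1 KN, |c i| ^ (2 + δ)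
      ≤ (∑ m, |μc m|) ^ (2 + δ) * P ^ (-((2 + δ) / 4)) * (Real.sqrt nr + 1) := by
  set B := ∑ m, |μc m| with hB
  have hB0 : 0 ≤ B := Finset.sum_nonneg fun m _ => abs_nonneg _
  have hg0 : 0 < |g| := abs_pos.mpr hgneg.ne
  have hP0 : (0:ℝ) < P := zero_lt_one.trans_le hP1
  have hK0 : ∀ m, (0:ℝ) < (K m : ℝ) := fun m => hP0.trans_le (hKlb m)
  have hK1 : ∀ m, 1 ≤ K m := by
    intro m
    have : (1:ℝ) ≤ (K m : ℝ) := hP1.trans (hKlb m)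
    exact_mod_cast this
  set w : Fin N → ℝ := fun m => |μc m| * (K m : ℝ) ^ (-(1/4 : ℝ)) with hw
  have hw0 : ∀ m, 0 ≤ w m := fun m =>
    mul_nonneg (abs_nonneg _) (Real.rpow_nonneg (Nat.cast_nonneg _) _)
  set A := ∑ m, w m with hA
  have hA0 : 0 ≤ A := Finset.sum_nonneg fun m _ => hw0 m
  set u := P ^ (-(1/4 : ℝ)) with hu
  have hu0 : 0 ≤ u := Real.rpow_nonneg hP0.le _
  have hwle : ∀ m, w m ≤ |μc m| * u :=
    fun m => mul_le_mul_of_nonneg_left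
      (Real.rpow_le_rpow_of_nonpos hP0 (hKlb m) (by norm_num)) (abs_nonneg _)
  have hAle : A ≤ B * u := by
    rw [hA, hB, Finset.sum_mul]
    exact Finset.sum_le_sum fun m _ => hwle m
  set e : Fin N → ℕ → ℝ :=
    fun m i => Real.exp (((K m : ℝ) - i) * g / Real.sqrt (K m)) with he
  have he0 : ∀ m i, 0 < e m i := fun _ _ => Real.exp_pos _
  have he1 : ∀ m, ∀ i : ℕ, i ≤ K m - 1 → e m i ≤ 1 := by
    intro m i him
    rw [he]
    dsimp only
    rw [Real.exp_le_one_iff]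
    apply div_nonpos_of_nonpos_of_nonneg _ (Real.sqrt_nonneg _)
    apply mul_nonpos_of_nonneg_of_nonpos _ hgneg.le
    have hiK : (i:ℝ) ≤ (K m : ℝ) := by
      exact_mod_cast Nat.cast_le.mpr (le_trans him (Nat.sub_le _ _))
    linarith
  have hcw : ∀ i, |c i| ≤ ∑ m ∈ Finset.univ.filter (fun m => i ≤ K m - 1), w m * e m i := by
    intro i
    rw [hc]
    refine le_trans (Finset.abs_sum_le_sum_abs _ _) (Finset.sum_le_sum ?_)
    intro m _
    rw [abs_mul, abs_mul, abs_of_nonneg (Real.rpow_nonneg (Nat.cast_nonneg _) _),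
      abs_of_pos (he0 m i)]
    apply le_of_eq
    rw [hw]; ring
  have hcA : ∀ i, |c i| ≤ A := by
    intro i
    refine (hcw i).trans (le_trans (Finset.sum_le_sum fun m hm => ?_)
      (Finset.sum_le_sum_of_subset_of_nonneg (Finset.filter_subset _ _) fun m _ _ => hw0 m))
    have hm' : i ≤ K m - 1 := by
      simpa using (Finset.mem_filter.mp hm).2
    calc w m * e m i ≤ w m * 1 := mul_le_mul_of_nonneg_left (he1 m i hm') (hw0 m)
      _ = w m := mul_one _
  have hT : ∑ i ∈ Finset.Icc 1 KN, |c i| ≤ ∑ m, w m * (Real.sqrt (K m) / |g| + 1) := by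
    calc ∑ i ∈ Finset.Icc 1 KN, |c i|
        ≤ ∑ i ∈ Finset.Icc 1 KN, ∑ m, (if i ≤ K m - 1 then w m * e m i else 0) := by
          refine Finset.sum_le_sum fun i _ => (hcw i).trans_eq ?_
          rw [Finset.sum_filter]
      _ = ∑ m, ∑ i ∈ Finset.Icc 1 KN, (if i ≤ K m - 1 then w m * e m i else 0) :=
          Finset.sum_comm
      _ ≤ ∑ m, w m * (Real.sqrt (K m) / |g| + 1) := by
          refine Finset.sum_le_sum fun m _ => ?_
          rw [← Finset.sum_filter]
          calc ∑ i ∈ (Finset.Icc 1 KN).filter (fun i => i ≤ K m - 1), w m * e m i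
              ≤ ∑ i ∈ Finset.Icc 1 (K m - 1), w m * e m i := by
                apply Finset.sum_le_sum_of_subset_of_nonneg
                · intro i hi
                  simp only [Finset.mem_filter, Finset.mem_Icc] at hi ⊢
                  omega
                · intros i _ _
                  exact mul_nonneg (hw0 m) (he0 m i).le
            _ = w m * ∑ i ∈ Finset.Icc 1 (K m - 1), e m i := by rw [Finset.mul_sum]
            _ ≤ w m * (Real.sqrt (K m) / |g| + 1) :=
                mul_le_mul_of_nonneg_left (geom_exp_sum_le (K m) g (hK1 m) hgneg) (hw0 m)
  have hgS : |g| * ∑ m, w m * (Real.sqrt (K m) / |g| + 1) ≤ B * u * (Real.sqrt nr + 1) := by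
    rw [Finset.mul_sum]
    calc ∑ m, |g| * (w m * (Real.sqrt (K m) / |g| + 1))
        = ∑ m, w m * (Real.sqrt (K m) + |g|) := by
          refine Finset.sum_congr rfl fun m _ => ?_
          field_simp
      _ ≤ ∑ m, (|μc m| * u) * (Real.sqrt nr + 1) := by
          refine Finset.sum_le_sum fun m _ => ?_
          apply mul_le_mul (hwle m) ?_ (by positivity) (mul_nonneg (abs_nonneg _) hu0)
          have hs := Real.sqrt_le_sqrt (hKub m)
          linarith
      _ = B * u * (Real.sqrt nr + 1) := by
          rw [hB, ← Finset.sum_mul, ← Finset.sum_mul]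
  have hstep : ∀ i, |c i| ^ (2 + δ) ≤ A ^ (1 + δ) * |c i| := by
    intro i
    have h1 : |c i| ^ (2 + δ) = |c i| ^ (1 + δ) * |c i| := by
      rw [show (2 + δ) = (1 + δ) + 1 by ring,
        Real.rpow_add' (abs_nonneg _) (by positivity), Real.rpow_one]
    rw [h1]
    exact mul_le_mul_of_nonneg_right
      (Real.rpow_le_rpow (abs_nonneg _) (hcA i) (by positivity)) (abs_nonneg _)
  calc |g| * ∑ i ∈ Finset.Icc 1 KN, |c i| ^ (2 + δ)
      ≤ |g| * ∑ i ∈ Finset.Icc 1 KN, A ^ (1 + δ) * |c i| :=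
        mul_le_mul_of_nonneg_left (Finset.sum_le_sum fun i _ => hstep i) (abs_nonneg _)
    _ = A ^ (1 + δ) * (|g| * ∑ i ∈ Finset.Icc 1 KN, |c i|) := by
        rw [← Finset.mul_sum]; ring
    _ ≤ A ^ (1 + δ) * (|g| * ∑ m, w m * (Real.sqrt (K m) / |g| + 1)) :=
        mul_le_mul_of_nonneg_left (mul_le_mul_of_nonneg_left hT (abs_nonneg _))
          (Real.rpow_nonneg hA0 _)
    _ ≤ A ^ (1 + δ) * (B * u * (Real.sqrt nr + 1)) :=
        mul_le_mul_of_nonneg_left hgS (Real.rpow_nonneg hA0 _)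
    _ ≤ (B * u) ^ (1 + δ) * (B * u * (Real.sqrt nr + 1)) := by
        apply mul_le_mul_of_nonneg_right
          (Real.rpow_le_rpow hA0 hAle (by positivity))
        have : (0:ℝ) ≤ Real.sqrt nr + 1 := by positivity
        exact mul_nonneg (mul_nonneg hB0 hu0) this
    _ = (B * u) ^ (2 + δ) * (Real.sqrt nr + 1) := by
        have hBu : (B * u) ^ (2 + δ) = (B * u) ^ (1 + δ) * (B * u) := by
          rw [show (2 + δ : ℝ) = (1 + δ) + 1 by ring,
            Real.rpow_add' (mul_nonneg hB0 hu0) (by positivity), Real.rpow_one]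
        rw [hBu]; ring
    _ = B ^ (2 + δ) * P ^ (-((2 + δ) / 4)) * (Real.sqrt nr + 1) := by
        rw [Real.mul_rpow hB0 hu0, hu, ← Real.rpow_mul hP0.le,
          show (-(1/4 : ℝ)) * (2 + δ) = -((2 + δ) / 4) by ring]

open Filter in
theorem lyapunov_coefficient_bound (N : ℕ) (hN : 1 ≤ N) (δ : ℝ) (hδ : 0 < δ)
    (t : Fin N → ℝ) (ht0 : ∀ m, 0 < t m) (ht1 : ∀ m, t m < 1) (htmono : StrictMono t)
    (μc : Fin N → ℝ) (γ : ℕ → ℝ) (hγneg : ∀ n, γ n < 0)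
    (hγ0 : Tendsto γ atTop (nhds 0))
    (hnγ : Tendsto (fun n : ℕ => (n : ℝ) * |γ n|) atTop atTop)
    (k : Fin N → ℕ → ℕ) (hk : ∀ m n, k m n = ⌊(n : ℝ) * t m⌋₊)
    (c : ℕ → ℕ → ℝ)
    (hc : ∀ n i, c n i = ∑ m ∈ Finset.univ.filter (fun m => i ≤ k m n - 1),
      ((k m n : ℝ) ^ (-(1/4 : ℝ))) * μc m *
        Real.exp (((k m n : ℝ) - i) * γ n / Real.sqrt (k m n))) :
    Tendsto (fun n => |γ n| *
        ∑ i ∈ Finset.Icc 1 (k ⟨N - 1, by omega⟩ n - 1), |c n i| ^ (2 + δ))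
      atTop (nhds 0) := by
  set z : Fin N := ⟨0, by omega⟩ with hz
  set τ := t z with hτ
  have hτ0 : 0 < τ := ht0 z
  have hτle : ∀ m, τ ≤ t m := fun m => htmono.monotone (Fin.le_def.mpr (Nat.zero_le _))
  set B := ∑ m, |μc m| with hB
  have hB0 : 0 ≤ B := Finset.sum_nonneg fun m _ => abs_nonneg _
  set q : ℝ := (2 + δ) / 4 with hq
  set D := 2 * B ^ (2 + δ) * (τ / 2) ^ (-q) with hD
  have hglim : Tendsto (fun n : ℕ => D * (n : ℝ) ^ (-(δ / 4))) atTop (nhds 0) := by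
    have h1 : Tendsto (fun n : ℕ => ((n : ℝ)) ^ (-(δ / 4))) atTop (nhds 0) :=
      (tendsto_rpow_neg_atTop (by positivity)).comp tendsto_natCast_atTop_atTop
    simpa using h1.const_mul D
  apply squeeze_zero' ?_ ?_ hglim
  · filter_upwards with n
    exact mul_nonneg (abs_nonneg _)
      (Finset.sum_nonneg fun i _ => Real.rpow_nonneg (abs_nonneg _) _)
  · have hev1 : ∀ᶠ n : ℕ in atTop, ∀ m : Fin N, (2:ℝ) ≤ (n : ℝ) * t m := by
      refine Filter.eventually_all.mpr fun m => ?_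
      exact (tendsto_natCast_atTop_atTop.atTop_mul_const (ht0 m)).eventually_ge_atTop 2
    have hev2 : ∀ᶠ n : ℕ in atTop, |γ n| ≤ 1 := by
      have h := hγ0 (Ioo_mem_nhds (by norm_num : (-1:ℝ) < 0) (by norm_num : (0:ℝ) < 1))
      filter_upwards [h] with n hn
      exact abs_le.mpr ⟨hn.1.le, hn.2.le⟩
    have hev3 : ∀ᶠ n : ℕ in atTop, 1 ≤ n := eventually_ge_atTop 1
    filter_upwards [hev1, hev2, hev3] with n h1 hγ1 hn1
    have hn0 : (1:ℝ) ≤ (n : ℝ) := by exact_mod_cast hn1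
    set P : ℝ := (n : ℝ) * (τ / 2) with hP
    have hP1 : 1 ≤ P := by
      have h2 := h1 z
      rw [← hτ] at h2
      rw [hP]; nlinarith
    have hklb : ∀ m, P ≤ (k m n : ℝ) := by
      intro m
      rw [hk]
      have h2m := h1 m
      have hfl : (n : ℝ) * t m - 1 ≤ (⌊(n : ℝ) * t m⌋₊ : ℝ) :=
        (Nat.sub_one_lt_floor _).le
      have hτm : (n : ℝ) * τ ≤ (n : ℝ) * t m :=
        mul_le_mul_of_nonneg_left (hτle m) (by positivity)
      rw [hP]; nlinarith
    have hkub : ∀ m, (k m n : ℝ) ≤ (n : ℝ) := by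
      intro m
      rw [hk]
      calc ((⌊(n : ℝ) * t m⌋₊ : ℕ) : ℝ) ≤ (n : ℝ) * t m := Nat.floor_le (mul_nonneg (Nat.cast_nonneg n) (ht0 m).le)
        _ ≤ (n : ℝ) * 1 := mul_le_mul_of_nonneg_left (ht1 m).le (by positivity)
        _ = (n : ℝ) := mul_one _
    refine le_trans (per_n_bound N δ hδ μc (γ n) (hγneg n) hγ1 (fun m => k m n)
      (k ⟨N - 1, by omega⟩ n - 1) (n : ℝ) P hP1 hklb hkub (c n) (fun i => hc n i)) ?_
    have hn0' : (0:ℝ) < (n : ℝ) := by linarith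
    have e1 : P ^ (-q) = (n : ℝ) ^ (-q) * (τ / 2) ^ (-q) := by
      rw [hP, Real.mul_rpow (Nat.cast_nonneg n) (by positivity)]
    have e2 : (n : ℝ) ^ (-q) * Real.sqrt n = (n : ℝ) ^ (-(δ / 4)) := by
      rw [Real.sqrt_eq_rpow, ← Real.rpow_add hn0']
      congr 1
      rw [hq]; ring
    have e3 : (n : ℝ) ^ (-q) ≤ (n : ℝ) ^ (-(δ / 4)) := by
      apply Real.rpow_le_rpow_of_exponent_le hn0
      rw [hq]; linarith
    calc B ^ (2 + δ) * P ^ (-((2 + δ) / 4)) * (Real.sqrt n + 1)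
        = B ^ (2 + δ) * ((n : ℝ) ^ (-q) * Real.sqrt n + (n : ℝ) ^ (-q)) * (τ / 2) ^ (-q) := by
          rw [show (-((2 + δ) / 4) : ℝ) = -q by rw [hq], e1]; ring
      _ ≤ B ^ (2 + δ) * ((n : ℝ) ^ (-(δ / 4)) + (n : ℝ) ^ (-(δ / 4))) * (τ / 2) ^ (-q) := by
          apply mul_le_mul_of_nonneg_right
            (mul_le_mul_of_nonneg_left ?_ (Real.rpow_nonneg hB0 _))
            (Real.rpow_nonneg (by positivity) _)
          rw [e2]
          exact add_le_add le_rfl e3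
      _ = D * (n : ℝ) ^ (-(δ / 4)) := by rw [hD]; ring
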